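/- Let S be a numerical semigroup on a compound sequence, n ∈ S, i ∈ [0,p], and let x be the i-normal factorization of n. Then for every factorization y of n, x_i ≥ y_i. -/

import Mathlib

private lemma sum_two_swap {s : Finset ℕ} {j k : ℕ} (hj : j ∈ s) (hk : k ∈ s) (hjk : j ≠ k)
    (f g : ℕ → ℕ) (h : ∀ m ∈ s, m ≠ j → m ≠ k → f m = g m) :
    ∑ m ∈ s, f m + (g j + g k) = ∑ m ∈ s, g m + (f j + f k) := by
  classical
  have hk' : k ∈ s.erase j := Finset.mem_erase.2 ⟨Ne.symm hjk, hk⟩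
  have hf : ∑ m ∈ s, f m = f j + (f k + ∑ m ∈ (s.erase j).erase k, f m) := by
    rw [Finset.add_sum_erase _ f hk', Finset.add_sum_erase _ f hj]
  have hg : ∑ m ∈ s, g m = g j + (g k + ∑ m ∈ (s.erase j).erase k, g m) := by
    rw [Finset.add_sum_erase _ g hk', Finset.add_sum_erase _ g hj]
  have ht : ∑ m ∈ (s.erase j).erase k, f m = ∑ m ∈ (s.erase j).erase k, g m := by
    refine Finset.sum_congr rfl fun m hm => ?_
    have h1 := Finset.mem_of_mem_erase hm
    have h2 := Finset.ne_of_mem_erase hm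
    have h3 := Finset.ne_of_mem_erase h1
    exact h m (Finset.mem_of_mem_erase h1) h3 h2
  omega

private lemma uniq (a b x y : ℕ → ℕ) :
    ∀ (d l i u : ℕ), l ≤ i → i ≤ u → l + d = u →
    (∀ k, l + 1 ≤ k → k ≤ u → 0 < a k) →
    (∀ k, l + 1 ≤ k → k ≤ u → 0 < b k) →
    (∀ k j, l + 1 ≤ j → j ≤ k → k ≤ u → Nat.gcd (a k) (b j) = 1) →
    (∀ j, j < i → x j < b (j + 1)) →
    (∀ j, j < i → y j < b (j + 1)) →
    (∀ j, i < j → j ≤ u → x j < a j) →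
    (∀ j, i < j → j ≤ u → y j < a j) →
    (∑ j ∈ Finset.Icc l u, x j * ((∏ k ∈ Finset.Icc (l + 1) j, b k) * ∏ k ∈ Finset.Icc (j + 1) u, a k)
      = ∑ j ∈ Finset.Icc l u, y j * ((∏ k ∈ Finset.Icc (l + 1) j, b k) * ∏ k ∈ Finset.Icc (j + 1) u, a k)) →
    x i = y i := by
  intro d
  induction d with
  | zero =>
    intro l i u hli hiu hlu _ _ _ _ _ _ _ hsum
    have hul : u = l := by omega
    have hil : i = l := by omega
    subst hul hil
    have he : Finset.Icc (i + 1) i = ∅ := Finset.Icc_eq_empty (by omega)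
    simp only [Finset.Icc_self, Finset.sum_singleton, he, Finset.prod_empty, one_mul,
      mul_one] at hsum
    exact hsum
  | succ d ih =>
    intro l i u hli hiu hlu hpa hpb hgcd hxb hyb hxa hya hsum
    obtain ⟨v, rfl⟩ : ∃ v, u = v + 1 := ⟨l + d, by omega⟩
    have hlv : l + d = v := by omega
    by_cases hi : i ≤ v
    · -- peel off the top index v+1, working modulo a (v+1)
      have hsplit : ∀ z : ℕ → ℕ,
          ∑ j ∈ Finset.Icc l (v + 1), z j * ((∏ k ∈ Finset.Icc (l + 1) j, b k) *
              ∏ k ∈ Finset.Icc (j + 1) (v + 1), a k)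
          = (∑ j ∈ Finset.Icc l v, z j * ((∏ k ∈ Finset.Icc (l + 1) j, b k) *
              ∏ k ∈ Finset.Icc (j + 1) (v + 1), a k))
            + z (v + 1) * ((∏ k ∈ Finset.Icc (l + 1) (v + 1), b k) *
              ∏ k ∈ Finset.Icc (v + 1 + 1) (v + 1), a k) :=
        fun z => Finset.sum_Icc_succ_top (by omega) _
      have hnu : (∏ k ∈ Finset.Icc (v + 1 + 1) (v + 1), a k) = 1 := by
        rw [Finset.Icc_eq_empty (by omega), Finset.prod_empty]
      rw [hsplit x, hsplit y, hnu, mul_one] at hsum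
      have hdvd : ∀ z : ℕ → ℕ, a (v + 1) ∣ ∑ j ∈ Finset.Icc l v,
          z j * ((∏ k ∈ Finset.Icc (l + 1) j, b k) * ∏ k ∈ Finset.Icc (j + 1) (v + 1), a k) := by
        intro z
        refine Finset.dvd_sum fun j hj => ?_
        have hj' := Finset.mem_Icc.1 hj
        have h1 : a (v + 1) ∣ ∏ k ∈ Finset.Icc (j + 1) (v + 1), a k :=
          Finset.dvd_prod_of_mem a (Finset.mem_Icc.2 ⟨by omega, le_rfl⟩)
        exact Dvd.dvd.mul_left (Dvd.dvd.mul_left h1 _) _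
      have d1 : (∑ j ∈ Finset.Icc l v, x j * ((∏ k ∈ Finset.Icc (l + 1) j, b k) *
            ∏ k ∈ Finset.Icc (j + 1) (v + 1), a k)) + x (v + 1) * ∏ k ∈ Finset.Icc (l + 1) (v + 1), b k
          ≡ x (v + 1) * ∏ k ∈ Finset.Icc (l + 1) (v + 1), b k [MOD a (v + 1)] := by
        simpa using (Nat.modEq_zero_iff_dvd.2 (hdvd x)).add_right
          (x (v + 1) * ∏ k ∈ Finset.Icc (l + 1) (v + 1), b k)
      have d2 : (∑ j ∈ Finset.Icc l v, y j * ((∏ k ∈ Finset.Icc (l + 1) j, b k) *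
            ∏ k ∈ Finset.Icc (j + 1) (v + 1), a k)) + y (v + 1) * ∏ k ∈ Finset.Icc (l + 1) (v + 1), b k
          ≡ y (v + 1) * ∏ k ∈ Finset.Icc (l + 1) (v + 1), b k [MOD a (v + 1)] := by
        simpa using (Nat.modEq_zero_iff_dvd.2 (hdvd y)).add_right
          (y (v + 1) * ∏ k ∈ Finset.Icc (l + 1) (v + 1), b k)
      have d2' : (∑ j ∈ Finset.Icc l v, x j * ((∏ k ∈ Finset.Icc (l + 1) j, b k) *
            ∏ k ∈ Finset.Icc (j + 1) (v + 1), a k)) + x (v + 1) * ∏ k ∈ Finset.Icc (l + 1) (v + 1), b k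
          ≡ y (v + 1) * ∏ k ∈ Finset.Icc (l + 1) (v + 1), b k [MOD a (v + 1)] := by
        rw [hsum]; exact d2
      have hm : x (v + 1) * (∏ k ∈ Finset.Icc (l + 1) (v + 1), b k)
          ≡ y (v + 1) * (∏ k ∈ Finset.Icc (l + 1) (v + 1), b k) [MOD a (v + 1)] :=
        d1.symm.trans d2'
      have hcop : Nat.gcd (a (v + 1)) (∏ k ∈ Finset.Icc (l + 1) (v + 1), b k) = 1 :=
        Nat.Coprime.prod_right fun k hk =>
          hgcd (v + 1) k (Finset.mem_Icc.1 hk).1 (Finset.mem_Icc.1 hk).2 le_rfl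
      have hxv : x (v + 1) < a (v + 1) := hxa (v + 1) (by omega) le_rfl
      have hyv : y (v + 1) < a (v + 1) := hya (v + 1) (by omega) le_rfl
      have hxyu : x (v + 1) = y (v + 1) := by
        have h := Nat.ModEq.cancel_right_of_coprime hcop hm
        unfold Nat.ModEq at h
        rwa [Nat.mod_eq_of_lt hxv, Nat.mod_eq_of_lt hyv] at h
      rw [hxyu] at hsum
      have hred := Nat.add_right_cancel hsum
      have hfac : ∀ z : ℕ → ℕ,
          (∑ j ∈ Finset.Icc l v, z j * ((∏ k ∈ Finset.Icc (l + 1) j, b k) *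
              ∏ k ∈ Finset.Icc (j + 1) (v + 1), a k))
          = (∑ j ∈ Finset.Icc l v, z j * ((∏ k ∈ Finset.Icc (l + 1) j, b k) *
              ∏ k ∈ Finset.Icc (j + 1) v, a k)) * a (v + 1) := by
        intro z
        rw [Finset.sum_mul]
        refine Finset.sum_congr rfl fun j hj => ?_
        have hj' := Finset.mem_Icc.1 hj
        rw [Finset.prod_Icc_succ_top (by omega : j + 1 ≤ v + 1) a]
        ring
      rw [hfac x, hfac y] at hred
      have hcancel := Nat.eq_of_mul_eq_mul_right (hpa (v + 1) (by omega) le_rfl) hred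
      exact ih l i v hli hi hlv (fun k h1 h2 => hpa k h1 (by omega))
        (fun k h1 h2 => hpb k h1 (by omega))
        (fun k j h1 h2 h3 => hgcd k j h1 h2 (by omega)) hxb hyb
        (fun j h1 h2 => hxa j h1 (by omega)) (fun j h1 h2 => hya j h1 (by omega)) hcancel
    · -- peel off the bottom index l, working modulo b (l+1)
      have hiv : i = v + 1 := by omega
      have hins : Finset.Icc l (v + 1) = insert l (Finset.Icc (l + 1) (v + 1)) := by
        ext m; simp only [Finset.mem_Icc, Finset.mem_insert]; omega
      have hnotmem : l ∉ Finset.Icc (l + 1) (v + 1) := by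
        simp only [Finset.mem_Icc]; omega
      have hsplit : ∀ z : ℕ → ℕ,
          ∑ j ∈ Finset.Icc l (v + 1), z j * ((∏ k ∈ Finset.Icc (l + 1) j, b k) *
              ∏ k ∈ Finset.Icc (j + 1) (v + 1), a k)
          = z l * ((∏ k ∈ Finset.Icc (l + 1) l, b k) * ∏ k ∈ Finset.Icc (l + 1) (v + 1), a k)
            + ∑ j ∈ Finset.Icc (l + 1) (v + 1), z j * ((∏ k ∈ Finset.Icc (l + 1) j, b k) *
              ∏ k ∈ Finset.Icc (j + 1) (v + 1), a k) :=
        fun z => by rw [hins, Finset.sum_insert hnotmem]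
      have hbempty : (∏ k ∈ Finset.Icc (l + 1) l, b k) = 1 := by
        rw [Finset.Icc_eq_empty (by omega), Finset.prod_empty]
      rw [hsplit x, hsplit y, hbempty, one_mul] at hsum
      have hdvd : ∀ z : ℕ → ℕ, b (l + 1) ∣ ∑ j ∈ Finset.Icc (l + 1) (v + 1),
          z j * ((∏ k ∈ Finset.Icc (l + 1) j, b k) * ∏ k ∈ Finset.Icc (j + 1) (v + 1), a k) := by
        intro z
        refine Finset.dvd_sum fun j hj => ?_
        have hj' := Finset.mem_Icc.1 hj
        have h1 : b (l + 1) ∣ ∏ k ∈ Finset.Icc (l + 1) j, b k :=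
          Finset.dvd_prod_of_mem b (Finset.mem_Icc.2 ⟨le_rfl, hj'.1⟩)
        exact Dvd.dvd.mul_left (Dvd.dvd.mul_right h1 _) _
      have d1 : x l * (∏ k ∈ Finset.Icc (l + 1) (v + 1), a k)
            + (∑ j ∈ Finset.Icc (l + 1) (v + 1), x j * ((∏ k ∈ Finset.Icc (l + 1) j, b k) *
              ∏ k ∈ Finset.Icc (j + 1) (v + 1), a k))
          ≡ x l * (∏ k ∈ Finset.Icc (l + 1) (v + 1), a k) [MOD b (l + 1)] := by
        simpa using (Nat.modEq_zero_iff_dvd.2 (hdvd x)).add_left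
          (x l * (∏ k ∈ Finset.Icc (l + 1) (v + 1), a k))
      have d2 : y l * (∏ k ∈ Finset.Icc (l + 1) (v + 1), a k)
            + (∑ j ∈ Finset.Icc (l + 1) (v + 1), y j * ((∏ k ∈ Finset.Icc (l + 1) j, b k) *
              ∏ k ∈ Finset.Icc (j + 1) (v + 1), a k))
          ≡ y l * (∏ k ∈ Finset.Icc (l + 1) (v + 1), a k) [MOD b (l + 1)] := by
        simpa using (Nat.modEq_zero_iff_dvd.2 (hdvd y)).add_left
          (y l * (∏ k ∈ Finset.Icc (l + 1) (v + 1), a k))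
      have d2' : x l * (∏ k ∈ Finset.Icc (l + 1) (v + 1), a k)
            + (∑ j ∈ Finset.Icc (l + 1) (v + 1), x j * ((∏ k ∈ Finset.Icc (l + 1) j, b k) *
              ∏ k ∈ Finset.Icc (j + 1) (v + 1), a k))
          ≡ y l * (∏ k ∈ Finset.Icc (l + 1) (v + 1), a k) [MOD b (l + 1)] := by
        rw [hsum]; exact d2
      have hm : x l * (∏ k ∈ Finset.Icc (l + 1) (v + 1), a k)
          ≡ y l * (∏ k ∈ Finset.Icc (l + 1) (v + 1), a k) [MOD b (l + 1)] := d1.symm.trans d2'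
      have hcop : Nat.gcd (b (l + 1)) (∏ k ∈ Finset.Icc (l + 1) (v + 1), a k) = 1 :=
        Nat.Coprime.prod_right fun k hk =>
          Nat.Coprime.symm
            (hgcd k (l + 1) le_rfl (Finset.mem_Icc.1 hk).1 (Finset.mem_Icc.1 hk).2)
      have hxl : x l < b (l + 1) := hxb l (by omega)
      have hyl : y l < b (l + 1) := hyb l (by omega)
      have hxyl : x l = y l := by
        have h := Nat.ModEq.cancel_right_of_coprime hcop hm
        unfold Nat.ModEq at h
        rwa [Nat.mod_eq_of_lt hxl, Nat.mod_eq_of_lt hyl] at h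
      rw [hxyl] at hsum
      have hred := Nat.add_left_cancel hsum
      have hfac : ∀ z : ℕ → ℕ,
          (∑ j ∈ Finset.Icc (l + 1) (v + 1), z j * ((∏ k ∈ Finset.Icc (l + 1) j, b k) *
              ∏ k ∈ Finset.Icc (j + 1) (v + 1), a k))
          = (∑ j ∈ Finset.Icc (l + 1) (v + 1), z j * ((∏ k ∈ Finset.Icc (l + 1 + 1) j, b k) *
              ∏ k ∈ Finset.Icc (j + 1) (v + 1), a k)) * b (l + 1) := by
        intro z
        rw [Finset.sum_mul]
        refine Finset.sum_congr rfl fun j hj => ?_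
        have hj' := Finset.mem_Icc.1 hj
        have hins2 : Finset.Icc (l + 1) j = insert (l + 1) (Finset.Icc (l + 1 + 1) j) := by
          ext m; simp only [Finset.mem_Icc, Finset.mem_insert]; omega
        rw [hins2, Finset.prod_insert (by simp only [Finset.mem_Icc]; omega)]
        ring
      rw [hfac x, hfac y] at hred
      have hcancel := Nat.eq_of_mul_eq_mul_right (hpb (l + 1) le_rfl (by omega)) hred
      exact ih (l + 1) i (v + 1) (by omega) (by omega) (by omega)
        (fun k h1 h2 => hpa k (by omega) h2) (fun k h1 h2 => hpb k (by omega) h2)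
        (fun k j h1 h2 h3 => hgcd k j (by omega) h2 h3) hxb hyb hxa hya hcancel

private def wt (a b : ℕ → ℕ) (i j : ℕ) : ℕ :=
  if j ≤ i then ∏ k ∈ Finset.Icc (j + 1) i, a k else ∏ k ∈ Finset.Icc (i + 1) j, b k

private lemma wt_pos {a b : ℕ → ℕ} {i p : ℕ} (j : ℕ) (hj : j ≤ p) (hip : i ≤ p)
    (hpa : ∀ k, 1 ≤ k → k ≤ p → 0 < a k) (hpb : ∀ k, 1 ≤ k → k ≤ p → 0 < b k) :
    0 < wt a b i j := by
  unfold wt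
  split
  · exact Finset.prod_pos fun k hk => by
      have := Finset.mem_Icc.1 hk; exact hpa k (by omega) (by omega)
  · exact Finset.prod_pos fun k hk => by
      have := Finset.mem_Icc.1 hk; exact hpb k (by omega) (by omega)

private lemma wt_left {a b : ℕ → ℕ} {i : ℕ} {j : ℕ} (hj : j < i) :
    wt a b i j = a (j + 1) * wt a b i (j + 1) := by
  unfold wt
  rw [if_pos (by omega : j ≤ i), if_pos (by omega : j + 1 ≤ i)]
  have hins : Finset.Icc (j + 1) i = insert (j + 1) (Finset.Icc (j + 1 + 1) i) := by
    ext m; simp only [Finset.mem_Icc, Finset.mem_insert]; omega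
  rw [hins, Finset.prod_insert (by simp only [Finset.mem_Icc]; omega)]

private lemma wt_right {a b : ℕ → ℕ} {i : ℕ} {j : ℕ} (hij : i ≤ j) :
    wt a b i (j + 1) = wt a b i j * b (j + 1) := by
  unfold wt
  rw [if_neg (by omega : ¬ j + 1 ≤ i)]
  rw [Finset.prod_Icc_succ_top (by omega : i + 1 ≤ j + 1) b]
  by_cases h : j ≤ i
  · have hji : j = i := by omega
    subst hji
    rw [if_pos le_rfl]
    rw [Finset.Icc_eq_empty (by omega : ¬ j + 1 ≤ j)]
    simp
  · rw [if_neg h]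

private lemma trade (p : ℕ) (a b n : ℕ → ℕ)
    (hn : ∀ j, j ≤ p → n j = (∏ k ∈ Finset.Icc 1 j, b k) * ∏ k ∈ Finset.Icc (j + 1) p, a k)
    (j : ℕ) (hj : j + 1 ≤ p) :
    b (j + 1) * n j = a (j + 1) * n (j + 1) := by
  rw [hn j (by omega), hn (j + 1) hj]
  rw [Finset.prod_Icc_succ_top (by omega : 1 ≤ j + 1) b]
  have hsplit : Finset.Icc (j + 1) p = insert (j + 1) (Finset.Icc (j + 1 + 1) p) := by
    ext m; simp only [Finset.mem_Icc, Finset.mem_insert]; omega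
  rw [hsplit, Finset.prod_insert (by simp only [Finset.mem_Icc]; omega)]
  ring

private lemma key (p : ℕ) (a b n : ℕ → ℕ)
    (ha : ∀ k, 1 ≤ k → k ≤ p → 2 ≤ a k ∧ a k < b k)
    (hab : ∀ k j, 1 ≤ j → j ≤ k → k ≤ p → Nat.gcd (a k) (b j) = 1)
    (hn : ∀ j, j ≤ p → n j = (∏ k ∈ Finset.Icc 1 j, b k) * ∏ k ∈ Finset.Icc (j + 1) p, a k)
    (N i : ℕ) (hip : i ≤ p)
    (x : ℕ → ℕ) (hx : ∑ j ∈ Finset.range (p + 1), x j * n j = N)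
    (hxb : ∀ j, j < i → x j < b (j + 1))
    (hxa : ∀ j, i < j → j ≤ p → x j < a j) :
    ∀ F (y : ℕ → ℕ), (∀ j, p < j → y j = 0) →
      (∑ j ∈ Finset.range (p + 1), y j * n j = N) →
      (∑ j ∈ Finset.range (p + 1), y j * wt a b i j < F) → y i ≤ x i := by
  have hpa : ∀ k, 1 ≤ k → k ≤ p → 0 < a k := fun k h1 h2 => by have := (ha k h1 h2).1; omega
  have hpb : ∀ k, 1 ≤ k → k ≤ p → 0 < b k := fun k h1 h2 => by have := ha k h1 h2; omega
  intro F
  induction F with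
  | zero => intro y _ _ hF; exact absurd hF (Nat.not_lt_zero _)
  | succ F ih =>
    intro y hys hy hF
    by_cases hL : ∃ j, j < i ∧ b (j + 1) ≤ y j
    · -- left trade
      obtain ⟨j, hji, hbyj⟩ := hL
      set y' : ℕ → ℕ := fun m =>
        if m = j then y j - b (j + 1) else if m = j + 1 then y (j + 1) + a (j + 1) else y m
        with hy'def
      have e1 : y' j = y j - b (j + 1) := if_pos rfl
      have e2 : y' (j + 1) = y (j + 1) + a (j + 1) := by
        simp only [hy'def]; rw [if_neg (by omega)]; simp
      have e3 : ∀ m, m ≠ j → m ≠ j + 1 → y' m = y m := fun m h1 h2 => by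
        simp only [hy'def]; rw [if_neg h1, if_neg h2]
      have hmemj : j ∈ Finset.range (p + 1) := Finset.mem_range.2 (by omega)
      have hmemj1 : j + 1 ∈ Finset.range (p + 1) := Finset.mem_range.2 (by omega)
      have tid : b (j + 1) * n j = a (j + 1) * n (j + 1) := trade p a b n hn j (by omega)
      -- sum preservation
      have swap1 := sum_two_swap hmemj hmemj1 (by omega) (fun m => y' m * n m)
        (fun m => y m * n m) (fun m _ h1 h2 => by rw [e3 m h1 h2])
      have eq0 : y' j * n j + y' (j + 1) * n (j + 1) = y j * n j + y (j + 1) * n (j + 1) := by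
        rw [e1, e2, add_mul, ← tid]
        have h1 : (y j - b (j + 1)) * n j + b (j + 1) * n j = y j * n j := by
          rw [← add_mul, Nat.sub_add_cancel hbyj]
        omega
      have hy' : ∑ m ∈ Finset.range (p + 1), y' m * n m = N := by
        omega
      -- potential decrease
      have wposj : 0 < wt a b i j := wt_pos j (by omega) hip hpa hpb
      have wid : wt a b i j = a (j + 1) * wt a b i (j + 1) := wt_left hji
      have swap2 := sum_two_swap hmemj hmemj1 (by omega) (fun m => y' m * wt a b i m)
        (fun m => y m * wt a b i m) (fun m _ h1 h2 => by rw [e3 m h1 h2])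
      have hb2 : 2 ≤ b (j + 1) := by have := ha (j + 1) (by omega) (by omega); omega
      have ineq : y' j * wt a b i j + y' (j + 1) * wt a b i (j + 1)
          < y j * wt a b i j + y (j + 1) * wt a b i (j + 1) := by
        rw [e1, e2, add_mul, ← wid]
        have hlt : (y j - b (j + 1)) * wt a b i j + wt a b i j < y j * wt a b i j := by
          have h1 : (y j - b (j + 1)) * wt a b i j + wt a b i j
              = (y j - b (j + 1) + 1) * wt a b i j := by ring
          rw [h1]
          exact Nat.mul_lt_mul_of_lt_of_le (by omega) le_rfl wposj
        omega
      have hΦ : ∑ m ∈ Finset.range (p + 1), y' m * wt a b i m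
          < ∑ m ∈ Finset.range (p + 1), y m * wt a b i m := by
        omega
      have hy's : ∀ m, p < m → y' m = 0 := fun m hm => by
        rw [e3 m (by omega) (by omega)]; exact hys m hm
      have hyy' : y i ≤ y' i := by
        by_cases hij1 : i = j + 1
        · subst hij1; rw [e2]; omega
        · rw [e3 i (by omega) hij1]
      exact le_trans hyy' (ih y' hy's hy' (by omega))
    · by_cases hR : ∃ j, i ≤ j ∧ j + 1 ≤ p ∧ a (j + 1) ≤ y (j + 1)
      · -- right trade
        obtain ⟨j, hij, hjp, hayj⟩ := hR
        set y' : ℕ → ℕ := fun m =>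
          if m = j then y j + b (j + 1) else if m = j + 1 then y (j + 1) - a (j + 1) else y m
          with hy'def
        have e1 : y' j = y j + b (j + 1) := if_pos rfl
        have e2 : y' (j + 1) = y (j + 1) - a (j + 1) := by
          simp only [hy'def]; rw [if_neg (by omega)]; simp
        have e3 : ∀ m, m ≠ j → m ≠ j + 1 → y' m = y m := fun m h1 h2 => by
          simp only [hy'def]; rw [if_neg h1, if_neg h2]
        have hmemj : j ∈ Finset.range (p + 1) := Finset.mem_range.2 (by omega)
        have hmemj1 : j + 1 ∈ Finset.range (p + 1) := Finset.mem_range.2 (by omega)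
        have tid : b (j + 1) * n j = a (j + 1) * n (j + 1) := trade p a b n hn j hjp
        have swap1 := sum_two_swap hmemj hmemj1 (by omega) (fun m => y' m * n m)
          (fun m => y m * n m) (fun m _ h1 h2 => by rw [e3 m h1 h2])
        have eq0 : y' j * n j + y' (j + 1) * n (j + 1) = y j * n j + y (j + 1) * n (j + 1) := by
          rw [e1, e2, add_mul, tid]
          have h1 : (y (j + 1) - a (j + 1)) * n (j + 1) + a (j + 1) * n (j + 1)
              = y (j + 1) * n (j + 1) := by
            rw [← add_mul, Nat.sub_add_cancel hayj]
          omega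
        have hy' : ∑ m ∈ Finset.range (p + 1), y' m * n m = N := by
          omega
        have wposj1 : 0 < wt a b i (j + 1) := wt_pos (j + 1) (by omega) hip hpa hpb
        have wid : wt a b i (j + 1) = wt a b i j * b (j + 1) := wt_right hij
        have swap2 := sum_two_swap hmemj hmemj1 (by omega) (fun m => y' m * wt a b i m)
          (fun m => y m * wt a b i m) (fun m _ h1 h2 => by rw [e3 m h1 h2])
        have ha2 : 2 ≤ a (j + 1) := (ha (j + 1) (by omega) (by omega)).1
        have ineq : y' j * wt a b i j + y' (j + 1) * wt a b i (j + 1)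
            < y j * wt a b i j + y (j + 1) * wt a b i (j + 1) := by
          rw [e1, e2, add_mul]
          have hbw : b (j + 1) * wt a b i j = wt a b i (j + 1) := by rw [wid]; ring
          rw [hbw]
          have hlt : (y (j + 1) - a (j + 1)) * wt a b i (j + 1) + wt a b i (j + 1)
              < y (j + 1) * wt a b i (j + 1) := by
            have h1 : (y (j + 1) - a (j + 1)) * wt a b i (j + 1) + wt a b i (j + 1)
                = (y (j + 1) - a (j + 1) + 1) * wt a b i (j + 1) := by ring
            rw [h1]
            exact Nat.mul_lt_mul_of_lt_of_le (by omega) le_rfl wposj1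
          omega
        have hΦ : ∑ m ∈ Finset.range (p + 1), y' m * wt a b i m
            < ∑ m ∈ Finset.range (p + 1), y m * wt a b i m := by
          omega
        have hy's : ∀ m, p < m → y' m = 0 := fun m hm => by
          rw [e3 m (by omega) (by omega)]; exact hys m hm
        have hyy' : y i ≤ y' i := by
          by_cases hij0 : i = j
          · subst hij0; rw [e1]; omega
          · rw [e3 i hij0 (by omega)]
        exact le_trans hyy' (ih y' hy's hy' (by omega))
      · -- y is i-normal; use uniqueness
        push_neg at hL hR
        have hyb : ∀ j, j < i → y j < b (j + 1) := hL
        have hya : ∀ j, i < j → j ≤ p → y j < a j := by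
          intro j h1 h2
          have h3 := hR (j - 1) (by omega) (by omega)
          have h4 : j - 1 + 1 = j := by omega
          rwa [h4] at h3
        have hr : Finset.range (p + 1) = Finset.Icc 0 p := by
          rw [← Nat.Ico_zero_eq_range, Finset.Ico_add_one_right_eq_Icc]
        have hsums : ∑ j ∈ Finset.Icc 0 p,
              x j * ((∏ k ∈ Finset.Icc (0 + 1) j, b k) * ∏ k ∈ Finset.Icc (j + 1) p, a k)
            = ∑ j ∈ Finset.Icc 0 p,
              y j * ((∏ k ∈ Finset.Icc (0 + 1) j, b k) * ∏ k ∈ Finset.Icc (j + 1) p, a k) := by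
          have hx' : ∑ j ∈ Finset.Icc 0 p,
              x j * ((∏ k ∈ Finset.Icc (0 + 1) j, b k) * ∏ k ∈ Finset.Icc (j + 1) p, a k) = N := by
            rw [← hx, hr]
            refine Finset.sum_congr rfl fun j hj => ?_
            rw [hn j (Finset.mem_Icc.1 hj).2]
          have hy'' : ∑ j ∈ Finset.Icc 0 p,
              y j * ((∏ k ∈ Finset.Icc (0 + 1) j, b k) * ∏ k ∈ Finset.Icc (j + 1) p, a k) = N := by
            rw [← hy, hr]
            refine Finset.sum_congr rfl fun j hj => ?_
            rw [hn j (Finset.mem_Icc.1 hj).2]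
          rw [hx', hy'']
        have hxy : x i = y i :=
          uniq a b x y p 0 i p (by omega) hip (by omega)
            (fun k h1 h2 => hpa k (by omega) h2) (fun k h1 h2 => hpb k (by omega) h2)
            (fun k j h1 h2 h3 => hab k j (by omega) h2 h3)
            hxb hyb hxa hya hsums
        omega

theorem stmt14 (p : ℕ) (hp : 1 ≤ p) (a b : ℕ → ℕ)
    (ha : ∀ i, 1 ≤ i → i ≤ p → 2 ≤ a i ∧ a i < b i)
    (hab : ∀ i j, 1 ≤ j → j ≤ i → i ≤ p → Nat.gcd (a i) (b j) = 1)
    (n : ℕ → ℕ)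
    (hn : ∀ i, i ≤ p → n i = (∏ j ∈ Finset.Icc 1 i, b j) * ∏ j ∈ Finset.Icc (i+1) p, a j)
    (N : ℕ) (i : ℕ) (hip : i ≤ p)
    (x : ℕ → ℕ) (hxs : ∀ j, p < j → x j = 0)
    (hx : ∑ j ∈ Finset.range (p+1), x j * n j = N)
    (hxb : ∀ j, j < i → x j < b (j+1))
    (hxa : ∀ j, i < j → j ≤ p → x j < a j)
    (y : ℕ → ℕ) (hys : ∀ j, p < j → y j = 0)
    (hy : ∑ j ∈ Finset.range (p+1), y j * n j = N) :
    y i ≤ x i :=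
  key p a b n ha hab hn N i hip x hx hxb hxa
    ((∑ j ∈ Finset.range (p + 1), y j * wt a b i j) + 1) y hys hy (Nat.lt_succ_self _)
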